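/- Let G be a position independent generalized Cops and Robbers game in which the Pursuer has a winning strategy. Then listing the vertices (p_P, q_E) of the round summary digraph R_G with q_E ≼ p_P so that the pairs in ≼_0 come first, followed by those in ≼_1 \ ≼_0, then those in ≼_2 \ ≼_1, and so on, yields a removable vertex ordering for R_G. -/

import Mathlib

open Classical

/-- A generalized Cops and Robbers game on Pursuer positions `PP` and Evader positions `PE`.
`F` is the set of final positions, `I` the set of allowed start positions, and
`AP`/`AE` give the (nonempty) sets of allowed moves of the Pursuer/Evader from a
non-final position (a move changes only that player's own coordinate). -/
structure GCR (PP PE : Type*) where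
  F : PP → PE → Prop
  I : PP → PE → Prop
  AP : PP → PE → Set PP
  AE : PP → PE → Set PE
  I_nonempty : ∃ p q, I p q
  AP_nonempty : ∀ p q, ¬ F p q → (AP p q).Nonempty
  AE_nonempty : ∀ p q, ¬ F p q → (AE p q).Nonempty

namespace GCR

variable {PP PE : Type*}

/-- The Pursuer's allowed start positions `I_P`. -/
def IP (G : GCR PP PE) (p : PP) : Prop := ∃ q, G.I p q

/-- The Evader's allowed start positions `I_E(p)` against the Pursuer start `p`. -/
def IE (G : GCR PP PE) (p : PP) (q : PE) : Prop := G.I p q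

/-- The sequence of relations `≼_i` from Evader positions to Pursuer positions:
`q ≼_0 p` iff `(p,q) ∈ F`; and for `i ≥ 1`, `q ≼_i p` iff `(p,q) ∈ F` or for every
`x ∈ A_E(p,q)` either `(p,x) ∈ F` or there is `w ∈ A_P(p,x)` with `x ≼_j w` for some `j < i`. -/
def rel (G : GCR PP PE) : ℕ → PE → PP → Prop
  | 0, q, p => G.F p q
  | (i+1), q, p => G.F p q ∨
      ∀ x ∈ G.AE p q, G.F p x ∨ ∃ w ∈ G.AP p x, ∃ j, ∃ _ : j < i + 1, G.rel j x w
  termination_by i _ _ => i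
  decreasing_by omega

/-- The stabilized relation `≼`. -/
def Rel (G : GCR PP PE) (q : PE) (p : PP) : Prop := ∃ i, G.rel i q p

/-- A strategy for the Pursuer: an initial position together with a move for every
finite history of positions (most recent first). -/
structure PStrat (G : GCR PP PE) where
  init : PP
  move : List (PP × PE) → PP

/-- A strategy for the Evader: an initial position (depending on the Pursuer's choice)
together with a move for every finite history of positions (most recent first). -/
structure EStrat (G : GCR PP PE) where
  init : PP → PE
  move : List (PP × PE) → PE

/-- A Pursuer strategy plays allowed moves at every non-final position. -/
def PStrat.MovesValid {G : GCR PP PE} (σ : PStrat G) : Prop :=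
  ∀ (h : List (PP × PE)) (c : PP × PE), ¬ G.F c.1 c.2 → σ.move (c :: h) ∈ G.AP c.1 c.2

/-- An Evader strategy plays allowed moves at every non-final position. -/
def EStrat.MovesValid {G : GCR PP PE} (τ : EStrat G) : Prop :=
  ∀ (h : List (PP × PE)) (c : PP × PE), ¬ G.F c.1 c.2 → τ.move (c :: h) ∈ G.AE c.1 c.2

/-- A valid Pursuer strategy: the initial position is an allowed start position,
and all moves are allowed. -/
def PStrat.Valid {G : GCR PP PE} (σ : PStrat G) : Prop :=
  G.IP σ.init ∧ σ.MovesValid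

/-- A valid Evader strategy: the initial position is an allowed response to any allowed
Pursuer start position, and all moves are allowed. -/
def EStrat.Valid {G : GCR PP PE} (τ : EStrat G) : Prop :=
  (∀ p, G.IP p → G.IE p (τ.init p)) ∧ τ.MovesValid

/-- The play of the game determined by strategies `σ` and `τ`: first both players choose
their start positions, then they move alternately with the Pursuer moving first.
Returns the current position after `n` single moves together with the history so far. -/
def play (G : GCR PP PE) (σ : PStrat G) (τ : EStrat G) : ℕ → (PP × PE) × List (PP × PE)
  | 0 => ((σ.init, τ.init σ.init), [(σ.init, τ.init σ.init)])
  | (n+1) =>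
      let s := play G σ τ n
      let nxt := if n % 2 = 0 then (σ.move s.2, s.1.2) else (s.1.1, τ.move s.2)
      (nxt, nxt :: s.2)

/-- The position after `n` single moves of the play determined by `σ` and `τ`. -/
def pos (G : GCR PP PE) (σ : PStrat G) (τ : EStrat G) (n : ℕ) : PP × PE :=
  (play G σ τ n).1

/-- Play from a given mid-game position `start`; `pFirst = true` means the Pursuer is
next to move. The players move alternately. Returns the current position after `n`
single moves together with the history so far. -/
def playFrom (G : GCR PP PE) (σ : PStrat G) (τ : EStrat G) (start : PP × PE)
    (pFirst : Bool) : ℕ → (PP × PE) × List (PP × PE)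
  | 0 => (start, [start])
  | (n+1) =>
      let s := playFrom G σ τ start pFirst n
      let nxt := if (decide (n % 2 = 0)) == pFirst
        then (σ.move s.2, s.1.2) else (s.1.1, τ.move s.2)
      (nxt, nxt :: s.2)

/-- The position after `n` single moves of the play from state `(start, pFirst)`. -/
def posFrom (G : GCR PP PE) (σ : PStrat G) (τ : EStrat G) (start : PP × PE)
    (pFirst : Bool) (n : ℕ) : PP × PE :=
  (playFrom G σ τ start pFirst n).1

/-- The Pursuer has a winning strategy: a valid strategy such that against every valid
Evader strategy the position eventually belongs to `F`. -/
def PursuerWins (G : GCR PP PE) : Prop :=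
  ∃ σ : PStrat G, σ.Valid ∧ ∀ τ : EStrat G, τ.Valid →
    ∃ n, G.F (pos G σ τ n).1 (pos G σ τ n).2

/-- The Evader has a winning strategy: a valid strategy such that against every valid
Pursuer strategy the position never belongs to `F`. -/
def EvaderWins (G : GCR PP PE) : Prop :=
  ∃ τ : EStrat G, τ.Valid ∧ ∀ σ : PStrat G, σ.Valid →
    ∀ n, ¬ G.F (pos G σ τ n).1 (pos G σ τ n).2

/-! ### The state digraph and its labelling -/

/-- The initial labelling of the state digraph: final states get `0`, all others `∞`.
A state is a position together with a `Bool` which is `true` when the Pursuer is next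
to move. -/
noncomputable def labelInit (G : GCR PP PE) : (PP × PE) × Bool → ℕ∞ :=
  fun s => if G.F s.1.1 s.1.2 then 0 else ⊤

/-- One round of updates of the labelling procedure: a non-final Pursuer-to-move state
gets `1 +` the minimum label over its out-neighbours, and a non-final Evader-to-move
state gets `1 +` the maximum label over its out-neighbours. -/
noncomputable def labelStep (G : GCR PP PE) (f : (PP × PE) × Bool → ℕ∞) :
    (PP × PE) × Bool → ℕ∞ :=
  fun s =>
    if G.F s.1.1 s.1.2 then 0
    else if s.2 then 1 + ⨅ w ∈ G.AP s.1.1 s.1.2, f ((w, s.1.2), false)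
    else 1 + ⨆ x ∈ G.AE s.1.1 s.1.2, f ((s.1.1, x), true)

/-- The stable labelling of the state digraph, obtained by repeating the update
procedure until no label changes (the iterates decrease pointwise, so the stable
labelling is the pointwise infimum of the iterates). -/
noncomputable def label (G : GCR PP PE) (s : (PP × PE) × Bool) : ℕ∞ :=
  ⨅ n : ℕ, (G.labelStep)^[n] G.labelInit s

/-! ### Length of the game -/

/-- The number of moves the Pursuer makes before the position first lies in `F`, in the
play determined by `σ` and `τ` (the Pursuer moves at odd time-steps, so has made
`(n+1)/2` moves by time-step `n`); `⊤` if the position never lies in `F`. -/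
noncomputable def captureMoves (G : GCR PP PE) (σ : PStrat G) (τ : EStrat G) : ℕ∞ :=
  ⨅ (n : ℕ) (_ : G.F (pos G σ τ n).1 (pos G σ τ n).2), (((n + 1) / 2 : ℕ) : ℕ∞)

/-- The length of the game under optimal play: the minimum over valid Pursuer strategies
of the maximum over valid Evader strategies of the number of Pursuer moves made before
the position first lies in `F`. -/
noncomputable def gameLength (G : GCR PP PE) : ℕ∞ :=
  ⨅ (σ : PStrat G) (_ : σ.Valid), ⨆ (τ : EStrat G) (_ : τ.Valid), G.captureMoves σ τ

/-- The quantity `ℓ(p,q)` from Corollary 1. -/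
noncomputable def ell (G : GCR PP PE) (p : PP) (q : PE) : ℕ∞ :=
  if G.Rel q p then ⨅ (j : ℕ) (_ : G.rel j q p), (j : ℕ∞)
  else 1 + ⨆ w ∈ G.AP p q, ⨅ (j : ℕ) (_ : G.rel j q w), (j : ℕ∞)

/-! ### Position independent games -/

/-- A game is position independent (with position digraphs given by out-neighbour maps
`GP` and `GE`) if, from any non-final position, the allowed moves of the Pursuer depend
only on the Pursuer's position and the allowed moves of the Evader depend only on the
Evader's position. -/
def PositionIndependent (G : GCR PP PE) (GP : PP → Set PP) (GE : PE → Set PE) : Prop :=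
  ∀ p q, ¬ G.F p q → G.AP p q = GP p ∧ G.AE p q = GE q

/-- A vertex `(p,q)` of the round summary digraph is removable with respect to a set `S`
of vertices. -/
def Removable (G : GCR PP PE) (GP : PP → Set PP) (GE : PE → Set PE)
    (v : PP × PE) (S : Set (PP × PE)) : Prop :=
  G.F v.1 v.2 ∨ ∀ x ∈ GE v.2, G.F v.1 x ∨ ∃ y ∈ GP v.1, (y, x) ∈ S

/-- A removable vertex ordering of the round summary digraph: a sequence of vertices in
which each element is removable with respect to the set of vertices preceding it, and
there is a Pursuer start position `p ∈ I_P` such that for all `q ∈ I_E(p)` either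
`(p,q) ∈ F` or the Pursuer has an allowed move `w` with `(w,q)` in the sequence. -/
def RemovableOrdering (G : GCR PP PE) (GP : PP → Set PP) (GE : PE → Set PE)
    (L : List (PP × PE)) : Prop :=
  (∀ i : Fin L.length, G.Removable GP GE (L.get i)
      {w | ∃ j : Fin L.length, (j : ℕ) < (i : ℕ) ∧ L.get j = w}) ∧
  ∃ p, G.IP p ∧ ∀ q, G.IE p q → G.F p q ∨ ∃ w ∈ GP p, (w, q) ∈ L


lemma rel_zero (G : GCR PP PE) (q : PE) (p : PP) : G.rel 0 q p ↔ G.F p q := by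
  rw [rel]

lemma rel_succ_iff (G : GCR PP PE) (i : ℕ) (q : PE) (p : PP) :
    G.rel (i+1) q p ↔ (G.F p q ∨
      ∀ x ∈ G.AE p q, G.F p x ∨ ∃ w ∈ G.AP p x, ∃ j, ∃ _ : j < i + 1, G.rel j x w) := by
  rw [rel]

lemma rel_succ_of_rel (G : GCR PP PE) {i : ℕ} {q : PE} {p : PP} (h : G.rel i q p) :
    G.rel (i+1) q p := by
  cases i with
  | zero => exact (G.rel_succ_iff 0 q p).2 (Or.inl ((G.rel_zero q p).1 h))
  | succ k =>
      rw [rel_succ_iff] at h ⊢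
      rcases h with h | h
      · exact Or.inl h
      · refine Or.inr fun x hx => ?_
        rcases h x hx with h' | ⟨w, hw, j, hj, hr⟩
        · exact Or.inl h'
        · exact Or.inr ⟨w, hw, j, Nat.lt_succ_of_lt hj, hr⟩

lemma rel_mono (G : GCR PP PE) {i j : ℕ} (hij : i ≤ j) {q : PE} {p : PP}
    (h : G.rel i q p) : G.rel j q p := by
  induction j with
  | zero => exact (Nat.le_zero.1 hij) ▸ h
  | succ k ih =>
      rcases Nat.lt_or_ge i (k+1) with h' | h'
      · exact G.rel_succ_of_rel (ih (Nat.lt_succ_iff.1 h'))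
      · exact (Nat.le_antisymm hij h') ▸ h

/-- A uniform cap: in a finite game, `Rel` is witnessed at a single level. -/
noncomputable def Ncap (G : GCR PP PE) [Fintype PP] [Fintype PE] : ℕ :=
  Finset.univ.sup fun z : PE × PP => sInf {i | G.rel i z.1 z.2}

lemma rel_Ncap (G : GCR PP PE) [Fintype PP] [Fintype PE] {q : PE} {p : PP}
    (h : G.Rel q p) : G.rel G.Ncap q p := by
  have hne : {i | G.rel i q p}.Nonempty := h
  have hmem := Nat.sInf_mem hne
  exact G.rel_mono (Finset.le_sup (f := fun z : PE × PP => sInf {i | G.rel i z.1 z.2})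
    (Finset.mem_univ (q, p))) hmem

/-- Unfolding the negation of `Rel`: an Evader escape move exists. -/
lemma not_Rel_elim (G : GCR PP PE) [Fintype PP] [Fintype PE] {x : PE} {w : PP}
    (h : ¬ G.Rel x w) :
    ¬ G.F w x ∧ ∃ x' ∈ G.AE w x, ¬ G.F w x' ∧ ∀ w' ∈ G.AP w x', ¬ G.Rel x' w' := by
  have h1 : ¬ G.rel (G.Ncap + 1) x w := fun hr => h ⟨_, hr⟩
  rw [rel_succ_iff] at h1
  push_neg at h1
  obtain ⟨hF, x', hx', hFx', hall⟩ := h1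
  refine ⟨hF, x', hx', hFx', fun w' hw' hRel => ?_⟩
  exact hall w' hw' G.Ncap (Nat.lt_succ_self _) (G.rel_Ncap hRel)

/-- An escape move for the Evader, maintaining `¬ Rel` when possible. -/
noncomputable def escape (G : GCR PP PE) (q0 : PE) (c : PP × PE) : PE :=
  if h : ∃ x ∈ G.AE c.1 c.2, ¬ G.F c.1 x ∧ ∀ w ∈ G.AP c.1 x, ¬ G.Rel x w then h.choose
  else if h2 : ¬ G.F c.1 c.2 then (G.AE_nonempty c.1 c.2 h2).choose else q0

lemma escape_spec (G : GCR PP PE) (q0 : PE) {c : PP × PE}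
    (h : ∃ x ∈ G.AE c.1 c.2, ¬ G.F c.1 x ∧ ∀ w ∈ G.AP c.1 x, ¬ G.Rel x w) :
    G.escape q0 c ∈ G.AE c.1 c.2 ∧ ¬ G.F c.1 (G.escape q0 c) ∧
      ∀ w ∈ G.AP c.1 (G.escape q0 c), ¬ G.Rel (G.escape q0 c) w := by
  rw [escape, dif_pos h]
  exact ⟨h.choose_spec.1, h.choose_spec.2.1, h.choose_spec.2.2⟩

lemma escape_mem (G : GCR PP PE) (q0 : PE) {c : PP × PE} (hc : ¬ G.F c.1 c.2) :
    G.escape q0 c ∈ G.AE c.1 c.2 := by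
  by_cases h : ∃ x ∈ G.AE c.1 c.2, ¬ G.F c.1 x ∧ ∀ w ∈ G.AP c.1 x, ¬ G.Rel x w
  · exact (G.escape_spec q0 h).1
  · rw [escape, dif_neg h, dif_pos hc]
    exact (G.AE_nonempty c.1 c.2 hc).choose_spec

/-- The Evader's initial choice. -/
noncomputable def einit (G : GCR PP PE) (p0 : PP) (q0 : PE) (p' : PP) : PE :=
  if p' = p0 then q0 else if h : G.IP p' then h.choose else q0

/-- If the Pursuer has a winning strategy in a position independent game, then listing
the vertices `(p,q)` of the round summary digraph with `q ≼ p` so that the pairs in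
`≼_0` come first, followed by those in `≼_1 \ ≼_0`, then those in `≼_2 \ ≼_1`, and so
on (i.e. in order of nondecreasing least index), yields a removable vertex ordering. -/
theorem removableOrdering_of_pursuerWins [Fintype PP] [Fintype PE] (G : GCR PP PE)
    (GP : PP → Set PP) (GE : PE → Set PE) (hPI : G.PositionIndependent GP GE)
    (hwin : G.PursuerWins) (L : List (PP × PE)) (hnodup : L.Nodup)
    (hmem : ∀ v : PP × PE, v ∈ L ↔ G.Rel v.2 v.1)
    (hsorted : ∀ i j : Fin L.length, (i : ℕ) ≤ (j : ℕ) →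
      sInf {n : ℕ | G.rel n (L.get i).2 (L.get i).1} ≤
        sInf {n : ℕ | G.rel n (L.get j).2 (L.get j).1}) :
    G.RemovableOrdering GP GE L := by
  classical
  constructor
  · -- each vertex is removable with respect to its predecessors
    intro i
    have hvL : L.get i ∈ L := L.get_mem _
    have hRel : G.Rel (L.get i).2 (L.get i).1 := (hmem _).1 hvL
    by_cases hF : G.F (L.get i).1 (L.get i).2
    · exact Or.inl hF
    · refine Or.inr fun x hx => ?_
      have hne : {n | G.rel n (L.get i).2 (L.get i).1}.Nonempty := hRel
      have hm := Nat.sInf_mem hne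
      set m := sInf {n | G.rel n (L.get i).2 (L.get i).1} with hmdef
      have hm0 : m ≠ 0 := by
        intro h
        rw [h] at hm
        exact hF ((G.rel_zero _ _).1 hm)
      obtain ⟨k, hk⟩ := Nat.exists_eq_succ_of_ne_zero hm0
      have hm2 : G.rel (k + 1) (L.get i).2 (L.get i).1 := by rw [hk] at hm; exact hm
      rw [rel_succ_iff] at hm2
      rcases hm2 with h | h
      · exact absurd h hF
      · by_cases hFx : G.F (L.get i).1 x
        · exact Or.inl hFx
        · have hx' : x ∈ G.AE (L.get i).1 (L.get i).2 := by
            rw [(hPI _ _ hF).2]; exact hx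
          rcases h x hx' with h' | ⟨w, hw, j, hj, hr⟩
          · exact absurd h' hFx
          · refine Or.inr ⟨w, ?_, ?_⟩
            · rw [← (hPI _ x hFx).1]; exact hw
            · have hwx : (w, x) ∈ L := (hmem (w, x)).2 ⟨j, hr⟩
              obtain ⟨k', hk'⟩ := List.mem_iff_get.1 hwx
              refine ⟨k', ?_, hk'⟩
              by_contra hge
              push_neg at hge
              have h2 := hsorted i k' hge
              have h1 : sInf {n | G.rel n (L.get k').2 (L.get k').1} ≤ j := by
                refine Nat.sInf_le ?_
                show G.rel j (L.get k').2 (L.get k').1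
                rw [hk']
                exact hr
              rw [← hmdef] at h2
              omega
  · -- the starting condition, via the Pursuer's winning strategy
    obtain ⟨σ, hσ, hwinσ⟩ := hwin
    by_contra hcon
    push_neg at hcon
    obtain ⟨q, hqI, hqF, hq⟩ := hcon σ.init hσ.1
    have hqRel : ∀ w ∈ GP σ.init, ¬ G.Rel q w := fun w hw hr => hq w hw ((hmem (w, q)).2 hr)
    have hinit : ∀ p', G.IP p' → G.IE p' (G.einit σ.init q p') := by
      intro p' hp'
      rw [einit]
      by_cases h : p' = σ.init
      · rw [if_pos h, h]; exact hqI
      · rw [if_neg h, dif_pos hp']; exact hp'.choose_spec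
    set τ : G.EStrat := ⟨G.einit σ.init q, fun l => G.escape q (l.headD (σ.init, q))⟩ with hτ
    have hτinit : τ.init = G.einit σ.init q := by rw [hτ]
    have hτmove : ∀ (l : List (PP × PE)) (c : PP × PE), τ.move (c :: l) = G.escape q c := by
      intro l c; rw [hτ]; rfl
    have hτvalid : τ.Valid := by
      constructor
      · intro p' hp'; rw [hτinit]; exact hinit p' hp'
      · intro l c hc; rw [hτmove]; exact G.escape_mem q hc
    have hpos0 : G.pos σ τ 0 = (σ.init, q) := by
      show (σ.init, τ.init σ.init) = _
      rw [hτinit, einit, if_pos rfl]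
    have hhead : ∀ n, ∃ t, (G.play σ τ n).2 = G.pos σ τ n :: t := by
      intro n
      cases n with
      | zero => exact ⟨[], rfl⟩
      | succ k => exact ⟨(G.play σ τ k).2, rfl⟩
    have hpos_even : ∀ n, n % 2 = 0 →
        G.pos σ τ (n + 1) = (σ.move (G.play σ τ n).2, (G.pos σ τ n).2) := by
      intro n h; simp [pos, play, h]
    have hpos_odd : ∀ n, n % 2 = 1 →
        G.pos σ τ (n + 1) = ((G.pos σ τ n).1, τ.move (G.play σ τ n).2) := by
      intro n h; simp [pos, play, h]
    have Inv : ∀ n,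
        (n % 2 = 0 → ¬ G.F (G.pos σ τ n).1 (G.pos σ τ n).2 ∧
          ∀ w ∈ G.AP (G.pos σ τ n).1 (G.pos σ τ n).2, ¬ G.Rel (G.pos σ τ n).2 w) ∧
        (n % 2 = 1 → ¬ G.Rel (G.pos σ τ n).2 (G.pos σ τ n).1) := by
      intro n
      induction n with
      | zero =>
          refine ⟨fun _ => ?_, fun h => by simp at h⟩
          rw [hpos0]
          refine ⟨hqF, ?_⟩
          show ∀ w ∈ G.AP σ.init q, ¬ G.Rel q w
          rw [(hPI _ _ hqF).1]
          exact hqRel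
      | succ k ih =>
          rcases Nat.mod_two_eq_zero_or_one k with hk | hk
          · refine ⟨fun h => by omega, fun _ => ?_⟩
            obtain ⟨hF, hAP⟩ := ih.1 hk
            obtain ⟨t, ht⟩ := hhead k
            rw [hpos_even k hk]
            apply hAP
            have hmv := hσ.2 t (G.pos σ τ k) hF
            rw [← ht] at hmv
            exact hmv
          · refine ⟨fun _ => ?_, fun h => by omega⟩
            have hR := ih.2 hk
            obtain ⟨hF, hgd⟩ := G.not_Rel_elim hR
            obtain ⟨t, ht⟩ := hhead k
            have hmv : τ.move (G.play σ τ k).2 = G.escape q (G.pos σ τ k) := by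
              rw [ht, hτmove]
            rw [hpos_odd k hk, hmv]
            have hs := G.escape_spec q hgd
            exact ⟨hs.2.1, hs.2.2⟩
    obtain ⟨n, hn⟩ := hwinσ τ hτvalid
    rcases Nat.mod_two_eq_zero_or_one n with h | h
    · exact ((Inv n).1 h).1 hn
    · exact (Inv n).2 h ⟨0, (G.rel_zero _ _).2 hn⟩


end GCR
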